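/- Fix positive constants C, R_{nA}, R_{nB}, V_DD and let Δ ≥ 0. Define V : [0,∞) → ℝ by V(t) = V_DD e^{−t/(C R_{nA})} for t ∈ [0,Δ], and V(t) = V(Δ) e^{−(1/(C R_{nA}) + 1/(C R_{nB}))(t−Δ)} for t ≥ Δ. Let δ(Δ) = (log 2 · C R_{nA} R_{nB} − Δ R_{nB})/(R_{nA} + R_{nB}) + Δ if 0 ≤ Δ < log 2 · C R_{nA}, and δ(Δ) = log 2 · C R_{nA} if Δ ≥ log 2 · C R_{nA}. Then V(δ(Δ)) = V_DD/2, and δ(Δ) is the unique time t ≥ 0 with V(t) = V_DD/2. -/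

import Mathlib

open Set Real

/-- Theorem 6.2 / 6.4 (rising input transitions): the output trajectory `V` of the
advanced NOR gate model for two rising input transitions separated by `Δ ≥ 0` decays as
`V_DD e^{-t/(C R_nA)}` for `t ∈ [0,Δ]` and then as `V(Δ) e^{-(1/(C R_nA)+1/(C R_nB))(t-Δ)}`
for `t ≥ Δ`; the MIS delay `δ` given by the stated case distinction is the unique
nonnegative time at which `V` crosses the threshold `V_DD / 2`. -/
theorem stmt9 (C RnA RnB VDD Δ : ℝ)
    (hC : 0 < C) (hA : 0 < RnA) (hB : 0 < RnB) (hV : 0 < VDD) (hΔ : 0 ≤ Δ)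
    (V : ℝ → ℝ)
    (hV1 : ∀ t ∈ Icc (0:ℝ) Δ, V t = VDD * Real.exp (-t/(C*RnA)))
    (hV2 : ∀ t ≥ Δ, V t =
      VDD * Real.exp (-Δ/(C*RnA)) * Real.exp (-(1/(C*RnA) + 1/(C*RnB))*(t-Δ)))
    (δ : ℝ)
    (hδ : δ = if Δ < Real.log 2 * C * RnA
      then (Real.log 2 * C * RnA * RnB - Δ * RnB)/(RnA + RnB) + Δ
      else Real.log 2 * C * RnA) :
    V δ = VDD/2 ∧ ∀ s ≥ 0, V s = VDD/2 → s = δ := by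
  have hL : 0 < Real.log 2 := Real.log_pos (by norm_num)
  have hCA : 0 < C * RnA := mul_pos hC hA
  have hCB : 0 < C * RnB := mul_pos hC hB
  have hAB : 0 < RnA + RnB := by linarith
  have hexp2 : Real.exp (-Real.log 2) = 1/2 := by
    rw [Real.exp_neg, Real.exp_log] <;> norm_num
  have key : ∀ x : ℝ, VDD * Real.exp x = VDD/2 ↔ x = -Real.log 2 := by
    intro x
    constructor
    · intro h
      have h2 : Real.exp x = Real.exp (-Real.log 2) := by
        rw [hexp2]
        field_simp at h
        nlinarith [hV, Real.exp_pos x]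
      exact Real.exp_injective h2
    · intro h; rw [h, hexp2]; ring
  by_cases hcase : Δ < Real.log 2 * C * RnA
  · rw [if_pos hcase] at hδ
    have hδΔ : Δ ≤ δ := by
      rw [hδ]
      have : 0 ≤ (Real.log 2 * C * RnA * RnB - Δ * RnB)/(RnA + RnB) := by
        apply div_nonneg _ hAB.le
        nlinarith
      linarith
    constructor
    · rw [hV2 δ hδΔ, mul_assoc, ← Real.exp_add, key]
      rw [hδ]
      field_simp
      ring
    · intro s hs hVs
      rcases le_or_gt s Δ with h | h
      · rw [hV1 s ⟨hs, h⟩, key] at hVs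
        have hs' : s = Real.log 2 * C * RnA := by
          field_simp at hVs
          nlinarith [hVs]
        linarith
      · rw [hV2 s h.le, mul_assoc, ← Real.exp_add, key] at hVs
        field_simp at hVs
        rw [hδ]
        field_simp
        have h2 : C*C*RnA * (s*(RnA+RnB)) =
            C*C*RnA * (Real.log 2*C*RnA*RnB - Δ*RnB + Δ*(RnA+RnB)) := by
          linear_combination (-C*C*RnA) * hVs
        linear_combination (-1) * hVs
  · rw [if_neg hcase] at hδ
    push_neg at hcase
    have hδ0 : δ = Real.log 2 * C * RnA := hδ
    constructor
    · rw [hV1 δ ⟨by nlinarith, by linarith⟩, key, hδ0]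
      field_simp
    · intro s hs hVs
      rcases le_or_gt s Δ with h | h
      · rw [hV1 s ⟨hs, h⟩, key] at hVs
        field_simp at hVs
        rw [hδ0]; nlinarith [hVs]
      · rw [hV2 s h.le, mul_assoc, ← Real.exp_add, key] at hVs
        have hlin : s*(RnA+RnB) = Real.log 2 * C * RnA * RnB + Δ * RnA := by
          field_simp at hVs
          have h2 : C*C*RnA * (s*(RnA+RnB)) =
              C*C*RnA * (Real.log 2*C*RnA*RnB + Δ*RnA) := by
            linear_combination (-C*C*RnA) * hVs
          exact mul_left_cancel₀ (by positivity) h2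
        exfalso
        nlinarith [hlin, mul_pos (sub_pos.2 h) hAB, mul_nonneg hB.le (sub_nonneg.2 hcase)]
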